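/- Let q, a ∈ ℂ with |q| < 1 and |q²a| < 1 (in particular |a|·|q|² < 1 and |a| < 1 suffice), and let φ(a,q) = exp(∑_{d=1}^∞ a^d / (d(1−q^d)²)). Then (1−a) · φ(a,q) · φ(q²a, q) = φ(qa, q)². -/

import Mathlib

/-- The closed-sector topological string partition function
`φ(a,q) = exp(∑_{d=1}^∞ a^d / (d(1−q^d)²))`. -/
noncomputable def phiClosed (q a : ℂ) : ℂ :=
  Complex.exp (∑' d : ℕ, a ^ (d + 1) / (((d : ℂ) + 1) * (1 - q ^ (d + 1)) ^ 2))

noncomputable def phiSum (q b : ℂ) : ℂ :=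
  ∑' d : ℕ, b ^ (d + 1) / (((d : ℂ) + 1) * (1 - q ^ (d + 1)) ^ 2)

lemma summable_phi (q a : ℂ) (hq : ‖q‖ < 1) (ha : ‖a‖ < 1) :
    Summable fun d : ℕ => a ^ (d + 1) / (((d : ℂ) + 1) * (1 - q ^ (d + 1)) ^ 2) := by
  have h1 : 0 < 1 - ‖q‖ := by linarith
  apply Summable.of_norm
  have hgeo : Summable fun d : ℕ =>
      (‖a‖) ^ d / ((1 - ‖q‖) ^ 2) :=
    (summable_geometric_of_lt_one (norm_nonneg a) ha).div_const _
  refine Summable.of_nonneg_of_le (fun d => norm_nonneg _) (fun d => ?_) hgeo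
  have hqd : ‖q ^ (d + 1)‖ ≤ ‖q‖ := by
    rw [norm_pow]
    calc ‖q‖ ^ (d + 1) ≤ ‖q‖ ^ 1 :=
          pow_le_pow_of_le_one (norm_nonneg q) hq.le (by omega)
      _ = ‖q‖ := pow_one _
  have hlb : 1 - ‖q‖ ≤ ‖1 - q ^ (d + 1)‖ := by
    have htri := norm_add_le (1 - q ^ (d + 1)) (q ^ (d + 1))
    simp only [sub_add_cancel, norm_one] at htri
    linarith
  have hnorm : ‖a ^ (d + 1) / (((d : ℂ) + 1) * (1 - q ^ (d + 1)) ^ 2)‖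
      = ‖a‖ ^ (d + 1) /
        (((d : ℝ) + 1) * ‖1 - q ^ (d + 1)‖ ^ 2) := by
    have hcast : ‖(d : ℂ) + 1‖ = (d : ℝ) + 1 := by
      rw [show ((d : ℂ) + 1) = ((d + 1 : ℕ) : ℂ) by push_cast; ring,
        Complex.norm_natCast]
      push_cast; ring
    simp [norm_div, norm_mul, norm_pow, hcast]
  rw [hnorm]
  refine div_le_div₀ (by positivity) ?_ (by positivity) ?_
  · exact pow_le_pow_of_le_one (norm_nonneg a) ha.le (by omega)
  · calc (1 - ‖q‖) ^ 2 ≤ ‖1 - q ^ (d + 1)‖ ^ 2 :=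
          pow_le_pow_left₀ h1.le hlb 2
      _ ≤ ((d : ℝ) + 1) * ‖1 - q ^ (d + 1)‖ ^ 2 := by
          nlinarith [sq_nonneg (‖1 - q ^ (d + 1)‖),
            (by exact_mod_cast Nat.zero_le d : (0:ℝ) ≤ (d:ℝ))]

/-- The nonlinear recursion for the closed-sector partition function:
`(1−a) · φ(a,q) · φ(q²a,q) = φ(qa,q)²`. -/
theorem phi_quadratic_recursion (q a : ℂ)
    (hq : ‖q‖ < 1) (ha : ‖a‖ < 1)
    (hqa : ‖q ^ 2 * a‖ < 1) :
    (1 - a) * phiClosed q a * phiClosed q (q ^ 2 * a) = (phiClosed q (q * a)) ^ 2 := by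
  have hqa1 : ‖q * a‖ < 1 := by
    rw [norm_mul]
    calc ‖q‖ * ‖a‖ ≤ 1 * ‖a‖ :=
          mul_le_mul_of_nonneg_right hq.le (norm_nonneg a)
      _ = ‖a‖ := one_mul _
      _ < 1 := ha
  have hS1 := summable_phi q a hq ha
  have hS2 := summable_phi q (q * a) hq hqa1
  have hS3 := summable_phi q (q ^ 2 * a) hq hqa
  -- pointwise identity
  have key : ∀ d : ℕ,
      a ^ (d + 1) / (((d : ℂ) + 1) * (1 - q ^ (d + 1)) ^ 2)
      + (q ^ 2 * a) ^ (d + 1) / (((d : ℂ) + 1) * (1 - q ^ (d + 1)) ^ 2)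
      - 2 * ((q * a) ^ (d + 1) / (((d : ℂ) + 1) * (1 - q ^ (d + 1)) ^ 2))
      = a ^ (d + 1) / ((d : ℂ) + 1) := by
    intro d
    have hx : (1 : ℂ) - q ^ (d + 1) ≠ 0 := by
      intro h
      have h1 : q ^ (d + 1) = 1 := by linear_combination -h
      have h2 : ‖q ^ (d + 1)‖ = 1 := by rw [h1]; simp
      rw [norm_pow] at h2
      have hlt : ‖q‖ ^ (d + 1) < 1 ^ (d + 1) :=
        pow_lt_pow_left₀ hq (norm_nonneg q) (by omega)
      simp [h2] at hlt
    have hn : ((d : ℂ) + 1) ≠ 0 := Nat.cast_add_one_ne_zero d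
    have e1 : (q * a) ^ (d + 1) = q ^ (d + 1) * a ^ (d + 1) := mul_pow _ _ _
    have e2 : (q ^ 2 * a) ^ (d + 1) = (q ^ (d + 1)) ^ 2 * a ^ (d + 1) := by
      rw [mul_pow, ← pow_mul, ← pow_mul, Nat.mul_comm]
    rw [e1, e2]
    field_simp
    ring
  have hlog : HasSum (fun d : ℕ => a ^ (d + 1) / ((d : ℂ) + 1))
      (-Complex.log (1 - a)) := by
    have h := Complex.hasSum_taylorSeries_neg_log
      (z := a) (by exact ha)
    have h2 := (hasSum_nat_add_iff' (f := fun n : ℕ => a ^ n / (n : ℂ)) 1).mpr h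
    simpa using h2
  have hsum : HasSum (fun d : ℕ =>
      a ^ (d + 1) / (((d : ℂ) + 1) * (1 - q ^ (d + 1)) ^ 2)
      + (q ^ 2 * a) ^ (d + 1) / (((d : ℂ) + 1) * (1 - q ^ (d + 1)) ^ 2)
      - 2 * ((q * a) ^ (d + 1) / (((d : ℂ) + 1) * (1 - q ^ (d + 1)) ^ 2)))
      (phiSum q a + phiSum q (q ^ 2 * a) - 2 * phiSum q (q * a)) :=
    (hS1.hasSum.add hS3.hasSum).sub (hS2.hasSum.mul_left 2)
  rw [funext key] at hsum
  have hEq : phiSum q a + phiSum q (q ^ 2 * a) - 2 * phiSum q (q * a)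
      = -Complex.log (1 - a) := hsum.unique hlog
  have h1a : (1 : ℂ) - a ≠ 0 := by
    intro h
    have h1 : a = 1 := by linear_combination -h
    rw [h1] at ha; simp at ha
  have hgoal : (1 - a) * Complex.exp (phiSum q a) * Complex.exp (phiSum q (q ^ 2 * a))
      = (Complex.exp (phiSum q (q * a))) ^ 2 := by
    have h : phiSum q a + phiSum q (q ^ 2 * a)
        = phiSum q (q * a) + phiSum q (q * a) + -Complex.log (1 - a) := by
      linear_combination hEq
    rw [mul_assoc, ← Complex.exp_add, h, Complex.exp_add, Complex.exp_neg,
      Complex.exp_log h1a, sq, ← Complex.exp_add]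
    field_simp
  exact hgoal
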